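/- Let p, q, n ≥ 1 and let U : [0,1] → ℂ^{p×n} and V : [0,1] → ℂ^{q×n} be measurable functions such that the matrix-valued functions U U^H, U V^H and V V^H are Bochner integrable on [0,1]. Suppose the q×q matrix ∫_0^1 V(ν) V(ν)^H dν is invertible. Then, in the Loewner order on Hermitian p×p matrices, ( ∫_0^1 U(ν) V(ν)^H dν ) ( ∫_0^1 V(ν) V(ν)^H dν )^{−1} ( ∫_0^1 U(ν) V(ν)^H dν )^H ≤ ∫_0^1 U(ν) U(ν)^H dν. -/

import Mathlib

open MeasureTheory Matrix
open scoped ComplexOrder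

/-- Entrywise (Bochner) integral over `[0,1]` of a matrix-valued function. -/
noncomputable def mInt {m n : ℕ} (f : ℝ → Matrix (Fin m) (Fin n) ℂ) :
    Matrix (Fin m) (Fin n) ℂ :=
  Matrix.of fun i j => ∫ ν in Set.Icc (0 : ℝ) 1, f ν i j

namespace CSaux

lemma integrable_conj {μ : Measure ℝ} {f : ℝ → ℂ} (h : Integrable f μ) :
    Integrable (fun x => (starRingEnd ℂ) (f x)) μ := by
  have := ((RCLike.conjCLE (K := ℂ)).toContinuousLinearMap).integrable_comp h
  simpa using this

lemma setIntegral_nonneg_cplx {f : ℝ → ℂ} (h : ∀ ν, 0 ≤ f ν) :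
    0 ≤ ∫ ν in Set.Icc (0 : ℝ) 1, f ν := by
  have hre : ∀ ν, f ν = ((f ν).re : ℂ) := by
    intro ν
    have h1 := (Complex.le_def.mp (h ν)).2
    apply Complex.ext <;> simp [← h1]
  calc (0 : ℂ) = ((0 : ℝ) : ℂ) := by norm_num
    _ ≤ ((∫ ν in Set.Icc (0 : ℝ) 1, (f ν).re : ℝ) : ℂ) := by
        rw [Complex.real_le_real]
        exact setIntegral_nonneg measurableSet_Icc
          (fun ν _ => (Complex.le_def.mp (h ν)).1)
    _ = ∫ ν in Set.Icc (0 : ℝ) 1, f ν := by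
        have h1 : ∫ ν in Set.Icc (0 : ℝ) 1, ((f ν).re : ℂ)
            = ((∫ ν in Set.Icc (0 : ℝ) 1, (f ν).re : ℝ) : ℂ) := integral_ofReal
        rw [← h1]
        exact integral_congr_ae (Filter.Eventually.of_forall fun ν => (hre ν).symm)

variable {m n k : ℕ}

lemma mInt_sub (f g : ℝ → Matrix (Fin m) (Fin n) ℂ)
    (hf : ∀ i j, IntegrableOn (fun ν => f ν i j) (Set.Icc (0 : ℝ) 1))
    (hg : ∀ i j, IntegrableOn (fun ν => g ν i j) (Set.Icc (0 : ℝ) 1)) :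
    mInt (fun ν => f ν - g ν) = mInt f - mInt g := by
  ext i j
  simp only [mInt, Matrix.of_apply, Matrix.sub_apply]
  exact integral_sub (hf i j) (hg i j)

lemma mInt_add (f g : ℝ → Matrix (Fin m) (Fin n) ℂ)
    (hf : ∀ i j, IntegrableOn (fun ν => f ν i j) (Set.Icc (0 : ℝ) 1))
    (hg : ∀ i j, IntegrableOn (fun ν => g ν i j) (Set.Icc (0 : ℝ) 1)) :
    mInt (fun ν => f ν + g ν) = mInt f + mInt g := by
  ext i j
  simp only [mInt, Matrix.of_apply, Matrix.add_apply]
  exact integral_add (hf i j) (hg i j)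

lemma mInt_const_mul (M : Matrix (Fin k) (Fin m) ℂ) (f : ℝ → Matrix (Fin m) (Fin n) ℂ)
    (hf : ∀ i j, IntegrableOn (fun ν => f ν i j) (Set.Icc (0 : ℝ) 1)) :
    mInt (fun ν => M * f ν) = M * mInt f := by
  ext i j
  simp only [mInt, Matrix.of_apply, Matrix.mul_apply]
  rw [integral_finset_sum _ (fun l _ => (hf l j).const_mul _)]
  exact Finset.sum_congr rfl fun l _ => integral_const_mul _ _

lemma mInt_mul_const (f : ℝ → Matrix (Fin m) (Fin n) ℂ) (M : Matrix (Fin n) (Fin k) ℂ)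
    (hf : ∀ i j, IntegrableOn (fun ν => f ν i j) (Set.Icc (0 : ℝ) 1)) :
    mInt (fun ν => f ν * M) = mInt f * M := by
  ext i j
  simp only [mInt, Matrix.of_apply, Matrix.mul_apply]
  rw [integral_finset_sum _ (fun l _ => (hf i l).mul_const _)]
  exact Finset.sum_congr rfl fun l _ => integral_mul_const _ _

lemma mInt_conjTranspose (f : ℝ → Matrix (Fin m) (Fin n) ℂ) :
    mInt (fun ν => (f ν)ᴴ) = (mInt f)ᴴ := by
  ext i j
  simp only [mInt, Matrix.of_apply, Matrix.conjTranspose_apply]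
  exact integral_conj

lemma integrableOn_const_mul (M : Matrix (Fin k) (Fin m) ℂ)
    (f : ℝ → Matrix (Fin m) (Fin n) ℂ)
    (hf : ∀ i j, IntegrableOn (fun ν => f ν i j) (Set.Icc (0 : ℝ) 1)) :
    ∀ i j, IntegrableOn (fun ν => (M * f ν) i j) (Set.Icc (0 : ℝ) 1) := by
  intro i j
  simp only [Matrix.mul_apply]
  exact integrable_finset_sum _ fun l _ => (hf l j).const_mul _

lemma integrableOn_mul_const (f : ℝ → Matrix (Fin m) (Fin n) ℂ)
    (M : Matrix (Fin n) (Fin k) ℂ)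
    (hf : ∀ i j, IntegrableOn (fun ν => f ν i j) (Set.Icc (0 : ℝ) 1)) :
    ∀ i j, IntegrableOn (fun ν => (f ν * M) i j) (Set.Icc (0 : ℝ) 1) := by
  intro i j
  simp only [Matrix.mul_apply]
  exact integrable_finset_sum _ fun l _ => (hf i l).mul_const _

lemma mInt_posSemidef (f : ℝ → Matrix (Fin m) (Fin m) ℂ)
    (hf : ∀ i j, IntegrableOn (fun ν => f ν i j) (Set.Icc (0 : ℝ) 1))
    (hpsd : ∀ ν, (f ν).PosSemidef) : (mInt f).PosSemidef := by
  rw [Matrix.posSemidef_iff_dotProduct_mulVec]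
  constructor
  · show (mInt f)ᴴ = mInt f
    rw [← mInt_conjTranspose]
    exact congrArg mInt (funext fun ν => (hpsd ν).1)
  · intro x
    have expand : ∀ (M : Matrix (Fin m) (Fin m) ℂ),
        star x ⬝ᵥ M.mulVec x = ∑ i, ∑ j, star (x i) * M i j * x j := by
      intro M
      simp [dotProduct, Matrix.mulVec, Finset.mul_sum, mul_assoc, mul_comm, mul_left_comm]
    have key : star x ⬝ᵥ (mInt f).mulVec x
        = ∫ ν in Set.Icc (0 : ℝ) 1, star x ⬝ᵥ (f ν).mulVec x := by
      rw [expand]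
      have : ∀ i j, (∫ ν in Set.Icc (0 : ℝ) 1, star (x i) * f ν i j * x j)
          = star (x i) * (mInt f) i j * x j := by
        intro i j
        rw [integral_mul_const, integral_const_mul]
        rfl
      calc ∑ i, ∑ j, star (x i) * (mInt f) i j * x j
          = ∑ i, ∑ j, ∫ ν in Set.Icc (0 : ℝ) 1, star (x i) * f ν i j * x j := by
            refine Finset.sum_congr rfl fun i _ => Finset.sum_congr rfl fun j _ => ?_
            rw [this]
        _ = ∑ i, ∫ ν in Set.Icc (0 : ℝ) 1, ∑ j, star (x i) * f ν i j * x j := by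
            refine Finset.sum_congr rfl fun i _ => ?_
            rw [integral_finset_sum _ (fun j _ => ((hf i j).const_mul _).mul_const _)]
        _ = ∫ ν in Set.Icc (0 : ℝ) 1, ∑ i, ∑ j, star (x i) * f ν i j * x j := by
            rw [integral_finset_sum _ (fun i _ => integrable_finset_sum _
              (fun j _ => ((hf i j).const_mul _).mul_const _))]
        _ = ∫ ν in Set.Icc (0 : ℝ) 1, star x ⬝ᵥ (f ν).mulVec x := by
            refine integral_congr_ae (Filter.Eventually.of_forall fun ν => ?_)
            exact (expand (f ν)).symm
    rw [key]
    exact setIntegral_nonneg_cplx fun ν => (hpsd ν).dotProduct_mulVec_nonneg x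

end CSaux

/-- matrix Cauchy–Schwarz inequality for integrals, in the
Loewner order. -/
theorem matrix_cauchy_schwarz_integral (p q n : ℕ) (hp : 1 ≤ p) (hq : 1 ≤ q) (hn : 1 ≤ n)
    (U : ℝ → Matrix (Fin p) (Fin n) ℂ) (V : ℝ → Matrix (Fin q) (Fin n) ℂ)
    (hUmeas : ∀ i j, Measurable fun ν => U ν i j)
    (hVmeas : ∀ i j, Measurable fun ν => V ν i j)
    (hUU : ∀ i j, IntegrableOn (fun ν => (U ν * (U ν)ᴴ) i j) (Set.Icc (0 : ℝ) 1))
    (hUV : ∀ i j, IntegrableOn (fun ν => (U ν * (V ν)ᴴ) i j) (Set.Icc (0 : ℝ) 1))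
    (hVV : ∀ i j, IntegrableOn (fun ν => (V ν * (V ν)ᴴ) i j) (Set.Icc (0 : ℝ) 1))
    (hinv : IsUnit (mInt fun ν => V ν * (V ν)ᴴ)) :
    (mInt (fun ν => U ν * (U ν)ᴴ) -
        mInt (fun ν => U ν * (V ν)ᴴ) * (mInt fun ν => V ν * (V ν)ᴴ)⁻¹ *
          (mInt (fun ν => U ν * (V ν)ᴴ))ᴴ).PosSemidef := by
  classical
  set A := mInt (fun ν => U ν * (U ν)ᴴ) with hA
  set B := mInt (fun ν => U ν * (V ν)ᴴ) with hB
  set C := mInt (fun ν => V ν * (V ν)ᴴ) with hC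
  set K := B * C⁻¹ with hK
  -- integrability of entries of V Uᴴ
  have hVU : ∀ i j, IntegrableOn (fun ν => (V ν * (U ν)ᴴ) i j) (Set.Icc (0 : ℝ) 1) := by
    intro i j
    have h1 := CSaux.integrable_conj (hUV j i)
    have h2 : (fun ν => (starRingEnd ℂ) ((U ν * (V ν)ᴴ) j i))
        = fun ν => (V ν * (U ν)ᴴ) i j := by
      funext ν
      simp [Matrix.mul_apply, Matrix.conjTranspose_apply, map_sum, mul_comm]
    rwa [h2] at h1
  -- C is Hermitian, and so is its inverse
  have hCH : Cᴴ = C := by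
    rw [hC, ← CSaux.mInt_conjTranspose]
    congr 1
    funext ν
    simp [Matrix.conjTranspose_mul]
  have hCinvH : (C⁻¹)ᴴ = C⁻¹ := by
    rw [Matrix.conjTranspose_nonsing_inv, hCH]
  have hdet : IsUnit C.det := (Matrix.isUnit_iff_isUnit_det C).mp hinv
  have hCiC : C⁻¹ * C = 1 := Matrix.nonsing_inv_mul C hdet
  -- Bᴴ = mInt (V Uᴴ)
  have hBH : mInt (fun ν => V ν * (U ν)ᴴ) = Bᴴ := by
    rw [hB, ← CSaux.mInt_conjTranspose]
    congr 1
    funext ν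
    simp [Matrix.conjTranspose_mul]
  -- the residual function and its expansion
  set g : ℝ → Matrix (Fin p) (Fin p) ℂ :=
    fun ν => (U ν - K * V ν) * (U ν - K * V ν)ᴴ with hg
  have hgexp : g = fun ν =>
      U ν * (U ν)ᴴ - K * (V ν * (U ν)ᴴ) - (U ν * (V ν)ᴴ) * Kᴴ
        + K * ((V ν * (V ν)ᴴ) * Kᴴ) := by
    funext ν
    simp only [hg, Matrix.conjTranspose_sub, Matrix.conjTranspose_mul,
      Matrix.sub_mul, Matrix.mul_sub, Matrix.mul_assoc]
    abel
  -- integrability of the pieces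
  have hKVU := CSaux.integrableOn_const_mul K (fun ν => V ν * (U ν)ᴴ) hVU
  have hUVK := CSaux.integrableOn_mul_const (fun ν => U ν * (V ν)ᴴ) Kᴴ hUV
  have hVVK := CSaux.integrableOn_mul_const (fun ν => V ν * (V ν)ᴴ) Kᴴ hVV
  have hKVVK := CSaux.integrableOn_const_mul K (fun ν => (V ν * (V ν)ᴴ) * Kᴴ) hVVK
  -- compute mInt g
  have e1 : mInt (fun ν => (U ν * (U ν)ᴴ - K * (V ν * (U ν)ᴴ) - U ν * (V ν)ᴴ * Kᴴ)
        + K * (V ν * (V ν)ᴴ * Kᴴ))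
      = mInt (fun ν => U ν * (U ν)ᴴ - K * (V ν * (U ν)ᴴ) - U ν * (V ν)ᴴ * Kᴴ)
        + mInt (fun ν => K * (V ν * (V ν)ᴴ * Kᴴ)) :=
    CSaux.mInt_add _ _
      (fun i j => ((hUU i j).sub (hKVU i j)).sub (hUVK i j)) hKVVK
  have e2 : mInt (fun ν => (U ν * (U ν)ᴴ - K * (V ν * (U ν)ᴴ)) - U ν * (V ν)ᴴ * Kᴴ)
      = mInt (fun ν => U ν * (U ν)ᴴ - K * (V ν * (U ν)ᴴ))
        - mInt (fun ν => U ν * (V ν)ᴴ * Kᴴ) :=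
    CSaux.mInt_sub _ _ (fun i j => (hUU i j).sub (hKVU i j)) hUVK
  have e3 : mInt (fun ν => U ν * (U ν)ᴴ - K * (V ν * (U ν)ᴴ))
      = mInt (fun ν => U ν * (U ν)ᴴ) - mInt (fun ν => K * (V ν * (U ν)ᴴ)) :=
    CSaux.mInt_sub _ _ hUU hKVU
  have e4 : mInt (fun ν => K * (V ν * (U ν)ᴴ)) = K * mInt (fun ν => V ν * (U ν)ᴴ) :=
    CSaux.mInt_const_mul _ _ hVU
  have e5 : mInt (fun ν => U ν * (V ν)ᴴ * Kᴴ) = mInt (fun ν => U ν * (V ν)ᴴ) * Kᴴ :=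
    CSaux.mInt_mul_const _ _ hUV
  have e6 : mInt (fun ν => K * (V ν * (V ν)ᴴ * Kᴴ)) = K * mInt (fun ν => V ν * (V ν)ᴴ * Kᴴ) :=
    CSaux.mInt_const_mul _ _ hVVK
  have e7 : mInt (fun ν => V ν * (V ν)ᴴ * Kᴴ) = mInt (fun ν => V ν * (V ν)ᴴ) * Kᴴ :=
    CSaux.mInt_mul_const _ _ hVV
  have hmg : mInt g = A - K * Bᴴ - B * Kᴴ + K * (C * Kᴴ) := by
    rw [hgexp, e1, e2, e3, e4, e5, e6, e7, hBH]
  -- simplify the algebra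
  have halg : A - K * Bᴴ - B * Kᴴ + K * (C * Kᴴ) = A - B * C⁻¹ * Bᴴ := by
    have hKH : Kᴴ = C⁻¹ * Bᴴ := by
      rw [hK, Matrix.conjTranspose_mul, hCinvH]
    have h1 : K * Bᴴ = B * C⁻¹ * Bᴴ := by rw [hK]
    have h2 : B * Kᴴ = B * C⁻¹ * Bᴴ := by rw [hKH, ← Matrix.mul_assoc]
    have h3 : K * (C * Kᴴ) = B * C⁻¹ * Bᴴ := by
      rw [hKH, hK, Matrix.mul_assoc B C⁻¹, ← Matrix.mul_assoc C C⁻¹ Bᴴ,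
        ← Matrix.mul_assoc C⁻¹ (C * C⁻¹) Bᴴ, ← Matrix.mul_assoc C⁻¹ C C⁻¹, hCiC,
        Matrix.one_mul, ← Matrix.mul_assoc]
    rw [h1, h2, h3]
    abel
  have hfinal : mInt g = A - B * C⁻¹ * Bᴴ := by rw [hmg, halg]
  rw [← hfinal]
  refine CSaux.mInt_posSemidef g ?_ ?_
  · intro i j
    simp only [hgexp]
    exact (((hUU i j).sub (hKVU i j)).sub (hUVK i j)).add (hKVVK i j)
  · intro ν
    exact Matrix.posSemidef_self_mul_conjTranspose _
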